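/- arXiv:1101.3382 — 2 statements merged into one kernel-verified Lean document; each statement's English description precedes it below -/
import Mathlib

section
/- With the F5-style partial order (F5-divisibility via module orderings in POT fashion): if t(u, f), with (u,f) ∈ G, lpp(u) = x^α e_i, f ≠ 0, is F5-divisible by some (u', f') ∈ G with lpp(u') = x^β e_j (i.e., lpp(f') divides t x^α and e_i ≻ e_j), and if the syzygy (f' e_i − f_i u', 0) belongs to G, then t(u, f) is gen-rewritable by G under the partial order in which any pair with zero polynomial part is smaller than any pair with nonzero polynomial part. -/
open MvPolynomial

noncomputable section

/-- Power products (exponent vectors). -/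
abbrev PP (n : ℕ) := Fin n →₀ ℕ

/-- Signatures: module monomials `x^α eᵢ` of `R^m`. -/
abbrev Sig (n m : ℕ) := Fin m × PP n

variable {K : Type*} [Field K] {n m : ℕ}

/-- Leading power product of a polynomial w.r.t. a monomial order (`lpp 0 = 0`). -/
def lpp (m₁ : MonomialOrder (Fin n)) (f : MvPolynomial (Fin n) K) : PP n :=
  m₁.toSyn.symm (f.support.sup m₁.toSyn)

/-- Leading power product, valued in `WithBot m₁.syn` so that `lppW 0 = ⊥`. -/
def lppW (m₁ : MonomialOrder (Fin n)) (f : MvPolynomial (Fin n) K) : WithBot m₁.syn :=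
  f.support.sup (fun d => ((m₁.toSyn d : m₁.syn) : WithBot m₁.syn))

/-- Leading coefficient. -/
def lc (m₁ : MonomialOrder (Fin n)) (f : MvPolynomial (Fin n) K) : K :=
  MvPolynomial.coeff (lpp m₁ f) f

/-- Multiplication of a module element by a power product `t`. -/
def smulMon (t : PP n) (u : Fin m → MvPolynomial (Fin n) K) :
    Fin m → MvPolynomial (Fin n) K :=
  fun i => (MvPolynomial.monomial t (1 : K)) * u i

/-- The set of module monomials occurring in a vector. -/
def sigSupport (u : Fin m → MvPolynomial (Fin n) K) : Finset (Sig n m) :=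
  Finset.univ.biUnion (fun i => (u i).support.image (fun α => ((i, α) : Sig n m)))

/-- Signature (leading module monomial) of a vector w.r.t. a term order `lo` on `R^m`;
`sig 0 = ⊥`. -/
def sig (lo : LinearOrder (Sig n m)) (u : Fin m → MvPolynomial (Fin n) K) :
    WithBot (Sig n m) :=
  @Finset.max _ lo (sigSupport u)

/-- Comparison of (possibly bottom) signatures. -/
def sigLE (lo : LinearOrder (Sig n m)) (a b : WithBot (Sig n m)) : Prop :=
  letI := lo; a ≤ b

def sigLT (lo : LinearOrder (Sig n m)) (a b : WithBot (Sig n m)) : Prop :=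
  letI := lo; a < b

/-- The leading coefficient of a vector. -/
def vlc (lo : LinearOrder (Sig n m)) (u : Fin m → MvPolynomial (Fin n) K) : K :=
  WithBot.recBotCoe 0 (fun p : Sig n m => MvPolynomial.coeff p.2 (u p.1)) (sig lo u)

/-- Divisibility of module monomials: same component and smaller exponent. -/
def sigDvd (a b : WithBot (Sig n m)) : Prop :=
  ∃ (i : Fin m) (α β : PP n),
    a = ((⟨i, α⟩ : Sig n m) : WithBot (Sig n m)) ∧
    b = ((⟨i, β⟩ : Sig n m) : WithBot (Sig n m)) ∧ α ≤ β

/-- The module `M = {(u,f) : u ⬝ (f₁,…,f_m) = f}`. -/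
def Mset (F : Fin m → MvPolynomial (Fin n) K) :
    Set ((Fin m → MvPolynomial (Fin n) K) × MvPolynomial (Fin n) K) :=
  {p | (∑ i, p.1 i * F i) = p.2}

/-- `(u,f)` has a standard representation w.r.t. `B`. -/
def StdRep (m₁ : MonomialOrder (Fin n)) (lo : LinearOrder (Sig n m))
    (B : Set ((Fin m → MvPolynomial (Fin n) K) × MvPolynomial (Fin n) K))
    (uf : (Fin m → MvPolynomial (Fin n) K) × MvPolynomial (Fin n) K) : Prop :=
  ∃ (s : ℕ) (p : Fin s → MvPolynomial (Fin n) K)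
    (vg : Fin s → (Fin m → MvPolynomial (Fin n) K) × MvPolynomial (Fin n) K),
    (∀ i, vg i ∈ B) ∧ uf.1 = ∑ i, p i • (vg i).1 ∧ uf.2 = ∑ i, p i * (vg i).2 ∧
    (∀ i, sigLE lo (sig lo (p i • (vg i).1)) (sig lo uf.1)) ∧
    (∀ i, lppW m₁ (p i * (vg i).2) ≤ lppW m₁ uf.2)

/-- `G` is an S-Gröbner basis for `Mset F`. -/
def SGBasis (m₁ : MonomialOrder (Fin n)) (lo : LinearOrder (Sig n m))
    (F : Fin m → MvPolynomial (Fin n) K)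
    (G : Set ((Fin m → MvPolynomial (Fin n) K) × MvPolynomial (Fin n) K)) : Prop :=
  ∀ uf ∈ Mset F, uf.2 ≠ 0 → ∃ vg ∈ G, vg.2 ≠ 0 ∧ lpp m₁ vg.2 ≤ lpp m₁ uf.2 ∧
    sigLE lo (sig lo (smulMon (lpp m₁ uf.2 - lpp m₁ vg.2) vg.1)) (sig lo uf.1)

/-- `t·(u,f)` is generalized rewritable by `B` w.r.t. a partial order `lt`. -/
def GenRew (lo : LinearOrder (Sig n m))
    (lt : ((Fin m → MvPolynomial (Fin n) K) × MvPolynomial (Fin n) K) →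
          ((Fin m → MvPolynomial (Fin n) K) × MvPolynomial (Fin n) K) → Prop)
    (B : Set ((Fin m → MvPolynomial (Fin n) K) × MvPolynomial (Fin n) K))
    (t : PP n) (p : (Fin m → MvPolynomial (Fin n) K) × MvPolynomial (Fin n) K) : Prop :=
  ∃ q ∈ B, lt q p ∧ sigDvd (sig lo q.1) (sig lo (smulMon t p.1))

end

section AuxLemmas

variable {K : Type*} [Field K] {n m : ℕ}

lemma mem_sigSupport_iff {u : Fin m → MvPolynomial (Fin n) K} {k : Fin m} {γ : PP n} :
    ((k, γ) : Sig n m) ∈ sigSupport u ↔ γ ∈ (u k).support := by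
  simp only [sigSupport, Finset.mem_biUnion, Finset.mem_image, Finset.mem_univ, true_and,
    Prod.mk.injEq]
  constructor
  · rintro ⟨l, δ, hδ, rfl, rfl⟩; exact hδ
  · intro h; exact ⟨k, γ, h, rfl, rfl⟩

lemma max_eq_of {α : Type*} [LinearOrder α] {s : Finset α} {a : α}
    (ha : a ∈ s) (hmax : ∀ b ∈ s, b ≤ a) : s.max = (a : WithBot α) := by
  refine le_antisymm (Finset.max_le ?_) (Finset.le_max ha)
  intro b hb
  exact_mod_cast hmax b hb

lemma le_of_max_eq {α : Type*} [LinearOrder α] {s : Finset α} {a b : α}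
    (h : s.max = (a : WithBot α)) (hb : b ∈ s) : b ≤ a := by
  have := Finset.le_max hb
  rw [h] at this
  exact_mod_cast this

lemma linord_le_iff {α : Type*} [L : LinearOrder α] (p q : α) :
    L.le p q ↔ ¬ L.lt q p := not_lt.symm

lemma sig_eq_of (lo : LinearOrder (Sig n m)) {u : Fin m → MvPolynomial (Fin n) K}
    {a : Sig n m} (ha : a ∈ sigSupport u)
    (hmax : ∀ b ∈ sigSupport u, lo.le b a) :
    sig lo u = (a : WithBot (Sig n m)) :=
  @max_eq_of _ lo _ _ ha hmax

lemma mem_of_sig_eq (lo : LinearOrder (Sig n m)) {u : Fin m → MvPolynomial (Fin n) K}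
    {a : Sig n m} (h : sig lo u = (a : WithBot (Sig n m))) :
    a ∈ sigSupport u :=
  @Finset.mem_of_max _ lo _ _ h

lemma le_of_sig_eq (lo : LinearOrder (Sig n m)) {u : Fin m → MvPolynomial (Fin n) K}
    {a : Sig n m} (h : sig lo u = (a : WithBot (Sig n m)))
    {b : Sig n m} (hb : b ∈ sigSupport u) : lo.le b a :=
  @le_of_max_eq _ lo _ _ _ h hb

lemma lpp_mem_support (m₁ : MonomialOrder (Fin n)) {f : MvPolynomial (Fin n) K}
    (hf : f ≠ 0) : lpp m₁ f ∈ f.support := by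
  obtain ⟨b, hb, he⟩ := Finset.exists_mem_eq_sup f.support
    (MvPolynomial.support_nonempty.mpr hf) m₁.toSyn
  rw [lpp, he]
  simpa using hb

lemma le_lpp (m₁ : MonomialOrder (Fin n)) {f : MvPolynomial (Fin n) K} {γ : PP n}
    (hγ : γ ∈ f.support) : m₁.toSyn γ ≤ m₁.toSyn (lpp m₁ f) := by
  rw [lpp, AddEquiv.apply_symm_apply]
  exact Finset.le_sup hγ

end AuxLemmas

/-- with `≺₂` the POT extension of `≺₁` (`e₁ ≻ … ≻ e_m`), if `t(u,f)`
(with `lpp u = x^α eᵢ`, `f ≠ 0`) is F5-divisible by `(u',f') ∈ G` with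
`lpp u' = x^β eⱼ` (`lpp f' ∣ t x^α`, `eᵢ ≻ eⱼ`), and the syzygy `(f' eᵢ − fᵢ u', 0)`
belongs to `G`, then `t(u,f)` is gen-rewritable by `G` for the partial order in which
any pair with zero polynomial part is smaller than any pair with nonzero part. -/
theorem stmt11 {K : Type*} [Field K] {n m : ℕ}
    (m₁ : MonomialOrder (Fin n)) (lo : LinearOrder (Sig n m))
    (hPOT : ∀ p q : Sig n m, lo.lt p q ↔
      (q.1 < p.1 ∨ (p.1 = q.1 ∧ m₁.toSyn p.2 < m₁.toSyn q.2)))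
    (F : Fin m → MvPolynomial (Fin n) K)
    (G : Set ((Fin m → MvPolynomial (Fin n) K) × MvPolynomial (Fin n) K))
    (hGM : G ⊆ Mset F)
    (u : Fin m → MvPolynomial (Fin n) K) (f : MvPolynomial (Fin n) K)
    (huf : (u, f) ∈ G) (hf : f ≠ 0) (i : Fin m) (α : PP n)
    (hsigu : sig lo u = ((⟨i, α⟩ : Sig n m) : WithBot (Sig n m)))
    (u' : Fin m → MvPolynomial (Fin n) K) (f' : MvPolynomial (Fin n) K)
    (hu'f' : (u', f') ∈ G) (hf' : f' ≠ 0) (j : Fin m) (β : PP n)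
    (hsigu' : sig lo u' = ((⟨j, β⟩ : Sig n m) : WithBot (Sig n m)))
    (hij : i < j) (t : PP n) (hdvd : lpp m₁ f' ≤ t + α)
    (hsyz : ((f' • (Pi.single i (1 : MvPolynomial (Fin n) K) :
                Fin m → MvPolynomial (Fin n) K) - F i • u',
              (0 : MvPolynomial (Fin n) K)) ∈ G)) :
    GenRew lo (fun p q => p.2 = 0 ∧ q.2 ≠ 0) G t (u, f) := by
  classical
  set w : Fin m → MvPolynomial (Fin n) K :=
    f' • (Pi.single i (1 : MvPolynomial (Fin n) K) : Fin m → MvPolynomial (Fin n) K)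
      - F i • u' with hw
  -- le via hPOT
  have hle_iff : ∀ p q : Sig n m, lo.le p q ↔ ¬ (lo.lt q p) :=
    fun p q => linord_le_iff (L := lo) p q
  -- u' has no component with index < j; in particular u' i = 0
  have hu'comp : ∀ k : Fin m, u' k ≠ 0 → j ≤ k := by
    intro k hk
    by_contra hjk
    push_neg at hjk
    obtain ⟨δ, hδ⟩ := MvPolynomial.support_nonempty.mpr hk
    have hmem : ((k, δ) : Sig n m) ∈ sigSupport u' := mem_sigSupport_iff.mpr hδ
    have hle := le_of_sig_eq lo hsigu' hmem
    have hlt : lo.lt (j, β) (k, δ) := (hPOT _ _).mpr (Or.inl hjk)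
    exact (hle_iff _ _).mp hle hlt
  have hu'i : u' i = 0 := by
    by_contra h
    exact absurd (hu'comp i h) (not_le.mpr hij)
  -- w i = f'
  have hwi : w i = f' := by
    simp [hw, Pi.smul_apply, smul_eq_mul, Pi.single_eq_same, hu'i]
  -- signature of w is (i, lpp f')
  have hsigw : sig lo w = (((i, lpp m₁ f') : Sig n m) : WithBot (Sig n m)) := by
    apply sig_eq_of lo
    · rw [mem_sigSupport_iff, hwi]
      exact lpp_mem_support m₁ hf'
    · rintro ⟨k, γ⟩ hb
      have hγ : γ ∈ (w k).support := mem_sigSupport_iff.mp hb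
      by_cases hk : k = i
      · subst hk
        rw [hwi] at hγ
        rw [hle_iff, hPOT]
        push_neg
        exact ⟨le_refl _, fun _ => le_lpp m₁ hγ⟩
      · -- here w k = - (F i * u' k), so u' k ≠ 0 and j ≤ k, hence i < k
        have hwk : w k = -(F i * u' k) := by
          simp [hw, Pi.smul_apply, smul_eq_mul, Pi.single_eq_of_ne hk]
        have hu'k : u' k ≠ 0 := by
          intro h0
          rw [hwk, h0, mul_zero, neg_zero] at hγ
          simp at hγ
        have hik : i < k := lt_of_lt_of_le hij (hu'comp k hu'k)
        rw [hle_iff, hPOT]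
        push_neg
        exact ⟨hik.le, fun h => absurd h.symm hk⟩
  -- facts about u
  have hαu : α ∈ (u i).support := mem_sigSupport_iff.mp (mem_of_sig_eq lo hsigu)
  -- signature of smulMon t u is (i, t + α)
  have hsigtu : sig lo (smulMon t u) =
      (((i, t + α) : Sig n m) : WithBot (Sig n m)) := by
    apply sig_eq_of lo
    · apply mem_sigSupport_iff.mpr
      rw [MvPolynomial.mem_support_iff, smulMon, MvPolynomial.coeff_monomial_mul, one_mul]
      exact MvPolynomial.mem_support_iff.mp hαu
    · rintro ⟨k, γ⟩ hb
      have hγ : γ ∈ ((MvPolynomial.monomial t (1 : K)) * u k).support :=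
        mem_sigSupport_iff.mp hb
      have hsub := MvPolynomial.support_mul (MvPolynomial.monomial t (1 : K)) (u k) hγ
      rw [MvPolynomial.support_monomial] at hsub
      simp only [one_ne_zero, if_false] at hsub
      obtain ⟨a, ha, d, hd, rfl⟩ := Finset.mem_add.mp hsub
      rw [Finset.mem_singleton] at ha
      subst ha
      have hdmem : ((k, d) : Sig n m) ∈ sigSupport u := mem_sigSupport_iff.mpr hd
      have hled := le_of_sig_eq lo hsigu hdmem
      rw [hle_iff, hPOT] at hled ⊢
      push_neg at hled ⊢
      refine ⟨hled.1, fun h => ?_⟩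
      have h2 := hled.2 h
      rw [map_add, map_add]
      exact add_le_add_right h2 _
  refine ⟨(w, 0), hsyz, ⟨rfl, hf⟩, i, lpp m₁ f', t + α, ?_, ?_, hdvd⟩
  · exact hsigw
  · exact hsigtu
end

section
/- The relation < on a finite indexed family B of pairs (u_i, f_i) ∈ R^m × R defined by: (u_j, f_j) < (u_i, f_i) iff, setting t' = lcm(lpp(u_i), lpp(u_j))/lpp(u_j) and t = lcm(lpp(u_i), lpp(u_j))/lpp(u_i) (so that lpp(t' u_j) = lpp(t u_i)), either lpp(t' f_j) ≺ lpp(t f_i), or (lpp(t' f_j) = lpp(t f_i) and j > i), is a strict partial order (irreflexive and transitive), provided that all lpp(u_i) lie in the same module component so the lcm is well-defined. -/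
open MvPolynomial

section Aux

variable {K : Type*} [Field K] {n : ℕ}

lemma aux_supp_mon_mul (s : PP n) (f : MvPolynomial (Fin n) K) :
    (MvPolynomial.monomial s (1 : K) * f).support = f.support.map (addLeftEmbedding s) := by
  ext d
  simp only [MvPolynomial.mem_support_iff, MvPolynomial.coeff_monomial_mul', one_mul,
    Finset.mem_map, addLeftEmbedding_apply]
  constructor
  · intro h
    split_ifs at h with hs
    · exact ⟨d - s, h, by rw [add_tsub_cancel_of_le hs]⟩
    · exact absurd rfl h
  · rintro ⟨a, ha, rfl⟩
    simpa using ha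

lemma aux_lppW_monomial_mul (m₁ : MonomialOrder (Fin n)) (s : PP n)
    (f : MvPolynomial (Fin n) K) :
    lppW m₁ (MvPolynomial.monomial s (1 : K) * f)
      = (lppW m₁ f).map (fun d => m₁.toSyn s + d) := by
  unfold lppW
  rw [aux_supp_mon_mul, Finset.sup_map]
  have hsm : StrictMono (fun d : m₁.syn => m₁.toSyn s + d) :=
    fun _ _ h => add_lt_add_right h (m₁.toSyn s)
  have hmono : Monotone (WithBot.map (fun d : m₁.syn => m₁.toSyn s + d)) :=
    hsm.withBot_map.monotone
  rw [Finset.comp_sup_eq_sup_comp (WithBot.map (fun d : m₁.syn => m₁.toSyn s + d))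
    (fun x y => hmono.map_sup x y) (WithBot.map_bot _)]
  apply Finset.sup_congr rfl
  intro d _
  simp [addLeftEmbedding, map_add]

lemma aux_shift (m₁ : MonomialOrder (Fin n)) (s t : PP n) (f : MvPolynomial (Fin n) K) :
    lppW m₁ (MvPolynomial.monomial (s + t) (1 : K) * f)
      = (lppW m₁ (MvPolynomial.monomial t (1 : K) * f)).map (fun d => m₁.toSyn s + d) := by
  rw [show (MvPolynomial.monomial (s + t) (1 : K)) =
      (MvPolynomial.monomial s (1 : K)) * (MvPolynomial.monomial t (1 : K)) by
    rw [MvPolynomial.monomial_mul, one_mul]]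
  rw [mul_assoc, aux_lppW_monomial_mul]

lemma aux_sub_decomp {σ γ t : PP n} (ht : t ≤ σ) (hσ : σ ≤ γ) :
    γ - t = (γ - σ) + (σ - t) := by
  ext x
  rw [Finsupp.add_apply, Finsupp.tsub_apply, Finsupp.tsub_apply, Finsupp.tsub_apply]
  have h1 := Finsupp.le_def.mp hσ x
  have h2 := Finsupp.le_def.mp ht x
  omega

lemma aux_strict (m₁ : MonomialOrder (Fin n)) (s : PP n) :
    StrictMono (fun d : m₁.syn => m₁.toSyn s + d) :=
  fun _ _ h => add_lt_add_right h (m₁.toSyn s)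

lemma aux_lt_shift (m₁ : MonomialOrder (Fin n)) (σ γ t t' : PP n)
    (ht : t ≤ σ) (ht' : t' ≤ σ) (hσ : σ ≤ γ) (f g : MvPolynomial (Fin n) K) :
    (lppW m₁ (MvPolynomial.monomial (γ - t) (1 : K) * f)
      < lppW m₁ (MvPolynomial.monomial (γ - t') (1 : K) * g)) ↔
    (lppW m₁ (MvPolynomial.monomial (σ - t) (1 : K) * f)
      < lppW m₁ (MvPolynomial.monomial (σ - t') (1 : K) * g)) := by
  rw [aux_sub_decomp ht hσ, aux_sub_decomp ht' hσ, aux_shift, aux_shift]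
  exact (aux_strict m₁ (γ - σ)).withBot_map.lt_iff_lt

lemma aux_eq_shift (m₁ : MonomialOrder (Fin n)) (σ γ t t' : PP n)
    (ht : t ≤ σ) (ht' : t' ≤ σ) (hσ : σ ≤ γ) (f g : MvPolynomial (Fin n) K) :
    (lppW m₁ (MvPolynomial.monomial (γ - t) (1 : K) * f)
      = lppW m₁ (MvPolynomial.monomial (γ - t') (1 : K) * g)) ↔
    (lppW m₁ (MvPolynomial.monomial (σ - t) (1 : K) * f)
      = lppW m₁ (MvPolynomial.monomial (σ - t') (1 : K) * g)) := by
  rw [aux_sub_decomp ht hσ, aux_sub_decomp ht' hσ, aux_shift, aux_shift]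
  exact ⟨fun h => Option.map_injective (aux_strict m₁ (γ - σ)).injective h,
    fun h => h ▸ rfl⟩

end Aux

/-- the GVW-style relation on an injectively indexed family
`(u₁,f₁),…,(u_N,f_N)` with all `lpp uᵢ = x^{αᵢ} e_k` in the same component:
`(u_j,f_j) < (u_i,f_i)` iff `lpp(t' f_j) ≺ lpp(t f_i)`, or
(`lpp(t' f_j) = lpp(t f_i)` and `j > i`), where
`t' = lcm(lpp uᵢ, lpp u_j)/lpp u_j` and `t = lcm(lpp uᵢ, lpp u_j)/lpp uᵢ`,
is a strict partial order (irreflexive and transitive). -/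
theorem stmt17 {K : Type*} [Field K] {n m : ℕ}
    (m₁ : MonomialOrder (Fin n)) (lo : LinearOrder (Sig n m)) (N : ℕ)
    (b : Fin N → (Fin m → MvPolynomial (Fin n) K) × MvPolynomial (Fin n) K)
    (hinj : Function.Injective b) (k : Fin m) (α : Fin N → PP n)
    (hsig : ∀ i, sig lo (b i).1 = ((⟨k, α i⟩ : Sig n m) : WithBot (Sig n m))) :
    let rel : Fin N → Fin N → Prop := fun j i =>
      lppW m₁ ((MvPolynomial.monomial ((α i ⊔ α j) - α j) (1 : K)) * (b j).2)
          < lppW m₁ ((MvPolynomial.monomial ((α i ⊔ α j) - α i) (1 : K)) * (b i).2)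
        ∨ (lppW m₁ ((MvPolynomial.monomial ((α i ⊔ α j) - α j) (1 : K)) * (b j).2)
            = lppW m₁ ((MvPolynomial.monomial ((α i ⊔ α j) - α i) (1 : K)) * (b i).2)
           ∧ i < j)
    (∀ i, ¬ rel i i) ∧ (∀ i j l, rel l j → rel j i → rel l i) := by
  intro rel
  refine ⟨fun i h => ?_, fun i j l hlj hji => ?_⟩
  · rcases h with h | ⟨_, h⟩
    · exact lt_irrefl _ h
    · exact lt_irrefl _ h
  · set γ := α i ⊔ α j ⊔ α l with hγ
    have key : ∀ p q : Fin N, α p ⊔ α q ≤ γ →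
        (rel q p ↔
          (lppW m₁ ((MvPolynomial.monomial (γ - α q)) (1 : K) * (b q).2)
              < lppW m₁ ((MvPolynomial.monomial (γ - α p)) (1 : K) * (b p).2)
            ∨ (lppW m₁ ((MvPolynomial.monomial (γ - α q)) (1 : K) * (b q).2)
                = lppW m₁ ((MvPolynomial.monomial (γ - α p)) (1 : K) * (b p).2)
               ∧ p < q))) := by
      intro p q hpq
      have h1 := aux_lt_shift m₁ (α p ⊔ α q) γ (α q) (α p)
        le_sup_right le_sup_left hpq (b q).2 (b p).2
      have h2 := aux_eq_shift m₁ (α p ⊔ α q) γ (α q) (α p)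
        le_sup_right le_sup_left hpq (b q).2 (b p).2
      simp only [rel]
      rw [← h1, ← h2]
    have hjl : α j ⊔ α l ≤ γ :=
      sup_le (le_sup_of_le_left le_sup_right) le_sup_right
    have hij : α i ⊔ α j ≤ γ := le_sup_left
    have hil : α i ⊔ α l ≤ γ :=
      sup_le (le_sup_of_le_left le_sup_left) le_sup_right
    have H1 := (key j l hjl).mp hlj
    have H2 := (key i j hij).mp hji
    refine (key i l hil).mpr ?_
    rcases H1 with h1 | ⟨h1, h1'⟩ <;> rcases H2 with h2 | ⟨h2, h2'⟩
    · exact Or.inl (h1.trans h2)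
    · exact Or.inl (h1.trans_eq h2)
    · exact Or.inl (h1 ▸ h2)
    · exact Or.inr ⟨h1.trans h2, h2'.trans h1'⟩
end
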